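/- arXiv:1207.5010 — 2 statements merged into one kernel-verified Lean document; each statement's English description precedes it below -/
import Mathlib

section
/- Let N and m be positive integers, let A be an N×N Hermitian positive semidefinite complex matrix, let H be an N×m complex matrix of rank r, and let t > 0 be a real number. Then, as ρ → ∞, log det(I + A + ρ^t·H·Hᴴ) − log det(I + A) = rt·log ρ + O(1). (This is the prelog computation underlying the private-message rate bound in the achievability proof, where A = H21·H21ᴴ + H31·H31ᴴ, H = H11, t = 1 − α1, and r = M.) -/
open Matrix ComplexOrder

open scoped MatrixOrder in
lemma det_key {N m : ℕ} (A : Matrix (Fin N) (Fin N) ℂ) (hA : A.PosSemidef)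
    (H : Matrix (Fin N) (Fin m) ℂ) :
    ∃ μ : Fin N → ℝ, (∀ i, 0 ≤ μ i) ∧ Fintype.card {i // μ i ≠ 0} = H.rank ∧
      ∀ c : ℝ, (1 + A + c • (H * Hᴴ)).det
        = (1 + A).det * ∏ i, ((1 + c * μ i : ℝ) : ℂ) := by
  have hP : (1 + A).PosDef := Matrix.PosDef.add_posSemidef Matrix.PosDef.one hA
  have hPu : IsUnit (1 + A).det := hP.det_pos.ne'.isUnit
  have hPinv : (1 + A)⁻¹.PosDef := hP.inv
  set S := CFC.sqrt (1 + A)⁻¹ with hSdef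
  have hS : S.PosSemidef := (CFC.sqrt_nonneg _).posSemidef
  have hSS : S * S = (1 + A)⁻¹ := CFC.sqrt_mul_sqrt_self _ hPinv.posSemidef.nonneg
  have hSdet : IsUnit S.det := by
    have h1 : S.det * S.det = (1 + A)⁻¹.det := by rw [← Matrix.det_mul, hSS]
    have h2 : (1 + A)⁻¹.det ≠ 0 := hPinv.det_pos.ne'
    have : S.det ≠ 0 := by
      intro h; rw [h, mul_zero] at h1; exact h2 h1.symm
    exact this.isUnit
  have hSinvS : S⁻¹ * S = 1 := Matrix.nonsing_inv_mul S hSdet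
  have hSSinv : S * S⁻¹ = 1 := Matrix.mul_nonsing_inv S hSdet
  have hSinvSinv : S⁻¹ * S⁻¹ = 1 + A := by
    rw [← Matrix.mul_inv_rev, hSS, Matrix.nonsing_inv_nonsing_inv _ hPu]
  have hB'eq : (S * H) * (S * H)ᴴ = S * (H * Hᴴ) * S := by
    rw [conjTranspose_mul, hS.isHermitian.eq]
    simp [Matrix.mul_assoc]
  have hB'psd : (S * (H * Hᴴ) * S).PosSemidef := hB'eq ▸ posSemidef_self_mul_conjTranspose (S * H)
  have hrank : (S * (H * Hᴴ) * S).rank = H.rank := by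
    rw [← hB'eq, rank_self_mul_conjTranspose, rank_mul_eq_right_of_isUnit_det S H hSdet]
  refine ⟨hB'psd.1.eigenvalues, fun i => hB'psd.eigenvalues_nonneg i,
    (hB'psd.1.rank_eq_card_non_zero_eigs).symm.trans hrank, fun c => ?_⟩
  set μ := hB'psd.1.eigenvalues with hμdef
  have inner : S⁻¹ * (S * (H * Hᴴ) * S) * S⁻¹ = H * Hᴴ := by
    calc S⁻¹ * (S * (H * Hᴴ) * S) * S⁻¹
        = (S⁻¹ * S) * ((H * Hᴴ) * (S * S⁻¹)) := by simp only [Matrix.mul_assoc]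
      _ = H * Hᴴ := by rw [hSinvS, hSSinv, one_mul, mul_one]
  have key1 : 1 + A + c • (H * Hᴴ) = S⁻¹ * (1 + c • (S * (H * Hᴴ) * S)) * S⁻¹ := by
    rw [mul_add, add_mul, mul_one, Matrix.mul_smul, Matrix.smul_mul, inner, hSinvSinv]
  -- spectral part
  set U : Matrix (Fin N) (Fin N) ℂ := (hB'psd.1.eigenvectorUnitary : Matrix (Fin N) (Fin N) ℂ) with hUdef
  have hUU : U * star U = 1 := Matrix.mem_unitaryGroup_iff.mp hB'psd.1.eigenvectorUnitary.2
  have hspec := hB'psd.1.spectral_theorem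
  have key2 : 1 + c • (S * (H * Hᴴ) * S)
      = U * (1 + c • Matrix.diagonal (RCLike.ofReal ∘ μ)) * star U := by
    calc 1 + c • (S * (H * Hᴴ) * S)
        = U * star U + c • (U * Matrix.diagonal (RCLike.ofReal ∘ μ) * star U) := by
          rw [hUU, hspec, Unitary.conjStarAlgAut_apply]
      _ = U * (1 + c • Matrix.diagonal (RCLike.ofReal ∘ μ)) * star U := by
          rw [mul_add, add_mul, mul_one, Matrix.mul_smul, Matrix.smul_mul]
  have hdiag : (1 : Matrix (Fin N) (Fin N) ℂ) + c • Matrix.diagonal (RCLike.ofReal ∘ μ)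
      = Matrix.diagonal (fun i => ((1 + c * μ i : ℝ) : ℂ)) := by
    ext i j
    by_cases h : i = j
    · subst h
      simp [Matrix.one_apply, Matrix.diagonal, Complex.real_smul]
    · simp [Matrix.one_apply, Matrix.diagonal, h]
  have detspec : (1 + c • (S * (H * Hᴴ) * S)).det = ∏ i, ((1 + c * μ i : ℝ) : ℂ) := by
    calc (1 + c • (S * (H * Hᴴ) * S)).det
        = U.det * ((1 + c • Matrix.diagonal (RCLike.ofReal ∘ μ) : Matrix (Fin N) (Fin N) ℂ)).det * (star U).det := by
          rw [key2, Matrix.det_mul, Matrix.det_mul]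
      _ = ((1 + c • Matrix.diagonal (RCLike.ofReal ∘ μ) : Matrix (Fin N) (Fin N) ℂ)).det * (U * star U).det := by
          rw [Matrix.det_mul]; ring
      _ = ∏ i, ((1 + c * μ i : ℝ) : ℂ) := by
          rw [hUU, Matrix.det_one, mul_one, hdiag, Matrix.det_diagonal]
  calc (1 + A + c • (H * Hᴴ)).det
      = S⁻¹.det * (1 + c • (S * (H * Hᴴ) * S)).det * S⁻¹.det := by
        rw [key1, Matrix.det_mul, Matrix.det_mul]
    _ = (S⁻¹ * S⁻¹).det * (1 + c • (S * (H * Hᴴ) * S)).det := by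
        rw [Matrix.det_mul]; ring
    _ = (1 + A).det * ∏ i, ((1 + c * μ i : ℝ) : ℂ) := by rw [hSinvSinv, detspec]

/-- Log-determinant of a complex matrix, as the real logarithm of the real part
of its determinant. -/
noncomputable def logDet {N : ℕ} (A : Matrix (Fin N) (Fin N) ℂ) : ℝ :=
  Real.log A.det.re

/-- Prelog computation underlying the private-message rate bound:
for a Hermitian positive semidefinite `A`, an `N × m` matrix `H` of rank `r`,
and `t > 0`, `log det(I + A + ρ^t H Hᴴ) − log det(I + A) = rt log ρ + O(1)`
as `ρ → ∞`. -/
theorem logdet_shifted_prelog (N m : ℕ) (hN : 0 < N) (hm : 0 < m)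
    (A : Matrix (Fin N) (Fin N) ℂ) (hA : A.PosSemidef)
    (H : Matrix (Fin N) (Fin m) ℂ) (r : ℕ) (hr : H.rank = r)
    (t : ℝ) (ht : 0 < t) :
    ∃ C > (0 : ℝ), ∃ ρ₀ > (0 : ℝ), ∀ ρ ≥ ρ₀,
      |(logDet (1 + A + (ρ ^ t : ℝ) • (H * Hᴴ)) - logDet (1 + A))
        - (r : ℝ) * t * Real.log ρ| ≤ C := by
  obtain ⟨μ, hμ0, hcard, hdet⟩ := det_key A hA H
  have hP : (1 + A).PosDef := Matrix.PosDef.add_posSemidef Matrix.PosDef.one hA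
  have hPdet : 0 < (1 + A).det := hP.det_pos
  have hPre : 0 < (1 + A).det.re ∧ (1 + A).det.im = 0 := by
    rw [Complex.lt_def] at hPdet
    exact ⟨by simpa using hPdet.1, hPdet.2.symm⟩
  have hPcoe : (1 + A).det = ((1 + A).det.re : ℂ) := by
    apply Complex.ext <;> simp [hPre.2]
  -- logDet formula
  have hlog : ∀ c : ℝ, 0 ≤ c →
      logDet (1 + A + c • (H * Hᴴ)) = logDet (1 + A) + ∑ i, Real.log (1 + c * μ i) := by
    intro c hc
    have hpos : ∀ i, (0:ℝ) < 1 + c * μ i := fun i => by nlinarith [hμ0 i]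
    have h1 : (1 + A + c • (H * Hᴴ)).det
        = (((1 + A).det.re * ∏ i, (1 + c * μ i) : ℝ) : ℂ) := by
      rw [hdet c, hPcoe]
      simp only [Complex.ofReal_re]
      push_cast
      ring
    have hprodpos : (0:ℝ) < ∏ i, (1 + c * μ i) :=
      Finset.prod_pos fun i _ => hpos i
    unfold logDet
    rw [h1, Complex.ofReal_re, Real.log_mul hPre.1.ne' hprodpos.ne',
      Real.log_prod fun i _ => (hpos i).ne']
  -- set up constants
  set s : Finset (Fin N) := Finset.univ.filter (fun i => μ i ≠ 0) with hsdef
  have hscard : s.card = r := by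
    rw [← hr, ← hcard, Fintype.card_subtype]
  have hμpos : ∀ i ∈ s, 0 < μ i := fun i hi => by
    have := (Finset.mem_filter.mp hi).2
    exact lt_of_le_of_ne (hμ0 i) (Ne.symm this)
  refine ⟨(∑ i ∈ s, (|Real.log (μ i)| + |Real.log (1 + μ i)|)) + 1, by positivity, 1,
    one_pos, fun ρ hρ => ?_⟩
  have hρ0 : (0:ℝ) < ρ := lt_of_lt_of_le one_pos hρ
  have hrt : (0:ℝ) < ρ ^ t := Real.rpow_pos_of_pos hρ0 t
  have hrt1 : (1:ℝ) ≤ ρ ^ t := Real.one_le_rpow hρ (le_of_lt ht)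
  rw [hlog (ρ ^ t) (le_of_lt hrt)]
  have hsum : ∑ i, Real.log (1 + ρ ^ t * μ i) = ∑ i ∈ s, Real.log (1 + ρ ^ t * μ i) := by
    rw [hsdef]
    rw [Finset.sum_filter]
    apply Finset.sum_congr rfl
    intro i _
    by_cases h : μ i = 0
    · simp [h]
    · simp [h]
  have hrlog : (r : ℝ) * t * Real.log ρ = ∑ i ∈ s, Real.log (ρ ^ t) := by
    rw [Finset.sum_const, hscard, Real.log_rpow hρ0, nsmul_eq_mul]
    ring
  rw [hsum, hrlog]
  have hterm : ∀ i ∈ s, |Real.log (1 + ρ ^ t * μ i) - Real.log (ρ ^ t)|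
      ≤ |Real.log (μ i)| + |Real.log (1 + μ i)| := by
    intro i hi
    have hμi := hμpos i hi
    have hub : Real.log (1 + ρ ^ t * μ i) ≤ Real.log (ρ ^ t) + Real.log (1 + μ i) := by
      rw [← Real.log_mul hrt.ne' (by nlinarith : (1:ℝ) + μ i ≠ 0)]
      apply Real.log_le_log (by nlinarith)
      nlinarith
    have hlb : Real.log (ρ ^ t) + Real.log (μ i) ≤ Real.log (1 + ρ ^ t * μ i) := by
      rw [← Real.log_mul hrt.ne' hμi.ne']
      apply Real.log_le_log (by positivity)
      nlinarith
    rw [abs_le]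
    constructor
    · have := neg_abs_le (Real.log (μ i))
      have h2 := abs_nonneg (Real.log (1 + μ i))
      linarith
    · have := le_abs_self (Real.log (1 + μ i))
      have h2 := abs_nonneg (Real.log (μ i))
      linarith
  calc |(logDet (1 + A) + ∑ i ∈ s, Real.log (1 + ρ ^ t * μ i) - logDet (1 + A))
        - ∑ i ∈ s, Real.log (ρ ^ t)|
      = |∑ i ∈ s, (Real.log (1 + ρ ^ t * μ i) - Real.log (ρ ^ t))| := by
        rw [Finset.sum_sub_distrib]; ring_nf
    _ ≤ ∑ i ∈ s, |Real.log (1 + ρ ^ t * μ i) - Real.log (ρ ^ t)| :=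
        Finset.abs_sum_le_sum_abs _ _
    _ ≤ ∑ i ∈ s, (|Real.log (μ i)| + |Real.log (1 + μ i)|) :=
        Finset.sum_le_sum hterm
    _ ≤ (∑ i ∈ s, (|Real.log (μ i)| + |Real.log (1 + μ i)|)) + 1 := by linarith
end

section
/- Let M = 1 and N = 2. For all real α1, α2 with 0 < α2 < α1 < 1, the weak-interference GDOF expression satisfies D_w(α1, α2) ≥ 2/3 (the generalized degrees of freedom achieved by an orthogonal scheme), and equality holds at (α1, α2) = (2/3, 1/3), i.e., D_w(2/3, 1/3) = 2/3. -/
/-- Weak-interference GDOF expression for the 3-user M×N partially asymmetric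
MIMO Gaussian interference channel with cross-link exponents 0 < α2 < α1 < 1. -/
noncomputable def Dw (M N : ℕ) (α1 α2 : ℝ) : ℝ :=
  min
    (min
      (max (M + ((N : ℝ) - 3 * M) * α2)
        (max (M + ((N : ℝ) - 3 * M) * α1 + (3 * (M : ℝ) - N) * α2)
          ((3 * (M : ℝ) - N) * α1 + N - 2 * M)))
      (max (M + (1 / 2) * ((N : ℝ) - 3 * M) * α2)
        ((1 / 2) * ((N : ℝ) - M) + (1 / 2) * (3 * (M : ℝ) - N) * α2)))
    (M + (1 / 3) * ((N : ℝ) - 3 * M) * α2)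

/-- For the 3-user 1×2 channel in the weak-interference regime, the GDOF is at
least 2/3 (achieved by an orthogonal scheme), with equality at
(α1, α2) = (2/3, 1/3). -/
theorem Dw_ge_orthogonal_one_two :
    (∀ α1 α2 : ℝ, 0 < α2 → α2 < α1 → α1 < 1 → Dw 1 2 α1 α2 ≥ 2 / 3) ∧
      Dw 1 2 (2 / 3) (1 / 3) = 2 / 3 := by
  constructor
  · intro α1 α2 h2 h21 h1
    unfold Dw
    push_cast
    refine le_min (le_min ?_ ?_) ?_
    · rcases le_total α2 (1/3) with h | h
      · exact le_max_of_le_left (by linarith)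
      · rcases le_total (2/3 : ℝ) α1 with h' | h'
        · exact le_max_of_le_right (le_max_of_le_right (by linarith))
        · exact le_max_of_le_right (le_max_of_le_left (by linarith))
    · rcases le_total α2 (1/2) with h | h
      · exact le_max_of_le_left (by linarith)
      · exact le_max_of_le_right (by linarith)
    · linarith
  · unfold Dw
    push_cast
    norm_num [min_def, max_def]
end
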